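/- arXiv:math/9805001 — 7 statements merged into one kernel-verified Lean document; each statement's English description precedes it below -/
import Mathlib

section
/- Let h be a real number with h ≠ −k/2 for every integer k ≥ 0. Then the differentiation operator D satisfies the commutation relations [D, l₋₁] = id, [D, l₀] = D, and [D, l₁] = D² on ℂ[z]; moreover D is the unique ℂ-linear endomorphism of ℂ[z] satisfying these three relations. -/
open Polynomial

noncomputable section

/-- Operators (ℂ-linear endomorphisms) on ℂ[z], realized as `Polynomial ℂ`. -/
abbrev E : Type := Module.End ℂ (Polynomial ℂ)

/-- The differentiation operator `D(p) = p'`. -/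
def Dop : E := Polynomial.derivative

/-- Multiplication by `z`. -/
def Mz : E := LinearMap.mulLeft ℂ (X : Polynomial ℂ)

/-- `l₋₁(p) = z·p`. -/
def lm1 : E := Mz

/-- `l₀(p) = z·p' + h·p`. -/
def l0 (h : ℝ) : E := Mz * Dop + (h : ℂ) • (1 : E)

/-- `l₁(p) = z·p'' + 2h·p'`. -/
def l1 (h : ℝ) : E := Mz * Dop ^ 2 + ((2 * h : ℝ) : ℂ) • Dop

/-- Commutator `[A,B] = A∘B − B∘A`. -/
def opComm (A B : E) : E := A * B - B * A

/-- The weight `w h n = n!·(2h)(2h+1)⋯(2h+n−1)`, i.e. the squared norm `⟨zⁿ, zⁿ⟩`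
in the unitarizable Verma module. -/
def w (h : ℝ) (n : ℕ) : ℝ := (n.factorial : ℝ) * ∏ i ∈ Finset.range n, (2 * h + (i : ℝ))


/-- If `X·p' = −p` then `p = 0`. -/
lemma aux_zero (p : Polynomial ℂ) (hp : X * derivative p = -p) : p = 0 := by
  ext n
  have h0 := congrArg (fun q => Polynomial.coeff q n) hp
  simp only [coeff_neg, coeff_zero] at h0 ⊢
  cases n with
  | zero => simpa using h0.symm
  | succ m =>
      rw [coeff_X_mul, coeff_derivative] at h0
      have h2 : p.coeff (m + 1) * ((m : ℂ) + 2) = 0 := by linear_combination h0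
      rcases mul_eq_zero.mp h2 with h | h
      · exact h
      · exact absurd h (by exact_mod_cast (Nat.cast_ne_zero (R := ℂ)).mpr (Nat.succ_ne_zero (m+1)))

/-- For nondegenerate extremal weight `h` (i.e. `h ≠ −k/2` for all `k ∈ ℕ`),
the differentiation operator `D` satisfies `[D,l₋₁] = id`, `[D,l₀] = D`, `[D,l₁] = D²`,
and it is the unique ℂ-linear endomorphism of `ℂ[z]` satisfying these relations. -/
theorem stmt_0 (h : ℝ) (hh : ∀ k : ℕ, h ≠ -(k : ℝ) / 2) :
    (opComm Dop lm1 = 1 ∧ opComm Dop (l0 h) = Dop ∧ opComm Dop (l1 h) = Dop ^ 2) ∧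
    (∀ D' : E,
      (opComm D' lm1 = 1 ∧ opComm D' (l0 h) = D' ∧ opComm D' (l1 h) = D' ^ 2) →
        D' = Dop) := by
  constructor
  · refine ⟨?_, ?_, ?_⟩
    · refine LinearMap.ext fun p => ?_
      simp [opComm, Dop, lm1, Mz, derivative_mul]
    · refine LinearMap.ext fun p => ?_
      simp [opComm, Dop, Mz, l0, derivative_mul, smul_eq_C_mul]
    · refine LinearMap.ext fun p => ?_
      simp [opComm, Dop, Mz, l1, derivative_mul, smul_eq_C_mul, pow_two]
  · rintro D' ⟨H1, H2, -⟩
    have h1 : ∀ p : Polynomial ℂ, D' (X * p) = X * D' p + p := by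
      intro p
      have := LinearMap.congr_fun H1 p
      simp [opComm, lm1, Mz] at this
      linear_combination this
    have hone : D' 1 = 0 := by
      have := LinearMap.congr_fun H2 1
      simp [opComm, l0, Mz, Dop] at this
      apply aux_zero
      linear_combination -this
    have hmono : ∀ n : ℕ, D' (X ^ n) = derivative (X ^ n) := by
      intro n
      induction n with
      | zero => simpa using hone
      | succ m ih =>
          rw [pow_succ, mul_comm, h1, ih, derivative_mul, derivative_X]
          ring
    refine LinearMap.ext fun p => ?_
    induction p using Polynomial.induction_on' with
    | add p q hp hq => simp [map_add, hp, hq]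
    | monomial n a =>
        rw [← C_mul_X_pow_eq_monomial, ← smul_eq_C_mul, map_smul, map_smul, hmono]; rfl


end
end

section
/- Let h be a real number with h ≠ −k/2 for every integer k ≥ 0. Then the operator F satisfies the commutation relations [l₁, F] = id, [l₀, F] = F, and [l₋₁, F] = F² on ℂ[z]; moreover F is the unique ℂ-linear endomorphism of ℂ[z] satisfying these three relations. -/
set_option linter.unusedTactic false

open Polynomial

noncomputable section

namespace Stmt1Aux

lemma E_ext {f g : E} (hfg : ∀ n : ℕ, f (X ^ n) = g (X ^ n)) : f = g := by
  apply LinearMap.ext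
  intro p
  induction p using Polynomial.induction_on' with
  | add p q hp hq => simp [map_add, hp, hq]
  | monomial n a =>
      have hm : (monomial n a : Polynomial ℂ) = a • X ^ n := by
        rw [smul_eq_C_mul, C_mul_X_pow_eq_monomial]
      rw [hm, map_smul, map_smul, hfg n]

lemma den_ne (h : ℝ) (hh : ∀ k : ℕ, h ≠ -(k : ℝ) / 2) (n : ℕ) :
    ((n : ℂ) + 2 * h) ≠ 0 := by
  intro hc
  apply hh n
  have hr : (((n : ℝ) + 2 * h : ℝ) : ℂ) = 0 := by push_cast; exact hc
  have : (n : ℝ) + 2 * h = 0 := by exact_mod_cast hr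
  linarith

lemma l0_apply (h : ℝ) (p : Polynomial ℂ) :
    l0 h p = X * derivative p + (h : ℂ) • p := by
  simp [l0, Mz, Dop, LinearMap.add_apply, Module.End.mul_apply, LinearMap.mulLeft_apply,
    LinearMap.smul_apply, Module.End.one_apply]

lemma l1_apply (h : ℝ) (p : Polynomial ℂ) :
    l1 h p = X * derivative (derivative p) + ((2 * h : ℝ) : ℂ) • derivative p := by
  simp [l1, Mz, Dop, LinearMap.add_apply, Module.End.mul_apply, LinearMap.mulLeft_apply,
    LinearMap.smul_apply, pow_two]

lemma lm1_pow (n : ℕ) : lm1 ((X : Polynomial ℂ) ^ n) = X ^ (n + 1) := by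
  simp [lm1, Mz, LinearMap.mulLeft_apply, pow_succ, mul_comm]

lemma l0_pow (h : ℝ) (n : ℕ) :
    l0 h ((X : Polynomial ℂ) ^ n) = ((n : ℂ) + h) • X ^ n := by
  rw [l0_apply]
  cases n with
  | zero => simp
  | succ m =>
      rw [derivative_X_pow]
      simp only [Nat.add_sub_cancel, smul_eq_C_mul, map_add, map_mul, map_one, map_natCast]
      push_cast
      ring

lemma l1_pow_zero (h : ℝ) : l1 h ((X : Polynomial ℂ) ^ 0) = 0 := by
  rw [l1_apply]; simp

lemma l1_pow (h : ℝ) (n : ℕ) :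
    l1 h ((X : Polynomial ℂ) ^ (n + 1)) = (((n : ℂ) + 1) * ((n : ℂ) + 2 * h)) • X ^ n := by
  rw [l1_apply, derivative_X_pow]
  cases n with
  | zero =>
      simp only [Nat.add_sub_cancel, pow_zero, Nat.cast_one, map_one, one_mul,
        derivative_one, mul_zero, zero_add]
      simp only [smul_eq_C_mul, map_add, map_mul, map_one, map_natCast,
        Complex.ofReal_mul, Complex.ofReal_ofNat, map_ofNat]
      simp [derivative_one]
  | succ m =>
      simp only [Nat.add_sub_cancel, derivative_C_mul, derivative_X_pow]
      simp only [smul_eq_C_mul, map_add, map_mul, map_one, map_natCast,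
        Complex.ofReal_mul, Complex.ofReal_ofNat, map_ofNat]
      push_cast
      ring

lemma l0_coeff (h : ℝ) (q : Polynomial ℂ) (m : ℕ) :
    (l0 h q).coeff m = ((m : ℂ) + h) * q.coeff m := by
  rw [l0_apply]
  cases m with
  | zero => simp [mul_coeff_zero]
  | succ k =>
      simp only [coeff_add, coeff_X_mul, coeff_derivative, coeff_smul, smul_eq_mul]
      push_cast
      ring

/-- eigenvector lemma: if `l0 q = (n+1+h) q` then `q` is a multiple of `X^(n+1)`. -/
lemma eigen (h : ℝ) (n : ℕ) (q : Polynomial ℂ)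
    (hq : l0 h q = ((n : ℂ) + 1 + h) • q) :
    q = q.coeff (n + 1) • X ^ (n + 1) := by
  have hc : ∀ m : ℕ, ((m : ℂ) + h) * q.coeff m = ((n : ℂ) + 1 + h) * q.coeff m := by
    intro m
    have := congrArg (fun p => Polynomial.coeff p m) hq
    simpa [l0_coeff, coeff_smul] using this
  ext m
  rcases eq_or_ne m (n + 1) with rfl | hm
  · simp [coeff_smul, coeff_X_pow]
  · have hz : q.coeff m = 0 := by
      by_contra hne
      have h1 : (m : ℂ) + h = (n : ℂ) + 1 + h := mul_right_cancel₀ hne (hc m)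
      have h2 : (m : ℂ) = ((n + 1 : ℕ) : ℂ) := by push_cast; linear_combination h1
      exact hm (Nat.cast_injective h2)
    simp [coeff_smul, coeff_X_pow, hm, hz]

end Stmt1Aux

/-- For nondegenerate extremal weight `h`, the operator `F`
(the unique endomorphism with `F(zⁿ) = zⁿ⁺¹/(n+2h)`) satisfies `[l₁,F] = id`,
`[l₀,F] = F`, `[l₋₁,F] = F²`, and is the unique endomorphism satisfying these relations. -/
theorem stmt_1 (h : ℝ) (hh : ∀ k : ℕ, h ≠ -(k : ℝ) / 2)
    (F : E) (hF : ∀ n : ℕ, F (X ^ n) = (((n : ℂ) + 2 * h)⁻¹) • X ^ (n + 1)) :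
    (opComm (l1 h) F = 1 ∧ opComm (l0 h) F = F ∧ opComm lm1 F = F ^ 2) ∧
    (∀ G : E,
      (opComm (l1 h) G = 1 ∧ opComm (l0 h) G = G ∧ opComm lm1 G = G ^ 2) →
        G = F) := by
  open Stmt1Aux in
  have hden := den_ne h hh
  have key1 : opComm (l1 h) F = 1 := by
    apply E_ext
    intro n
    cases n with
    | zero =>
        simp only [opComm, LinearMap.sub_apply, Module.End.mul_apply, Module.End.one_apply,
          hF, map_smul, l1_pow, l1_pow_zero, map_zero, smul_zero, sub_zero, smul_smul]
        have h0 : (2 * (h : ℂ)) ≠ 0 := by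
          have := hden 0; push_cast at this; simpa using this
        match_scalars
        push_cast
        field_simp
        simp [h0]
    | succ m =>
        simp only [opComm, LinearMap.sub_apply, Module.End.mul_apply, Module.End.one_apply,
          hF, map_smul, l1_pow, smul_smul]
        have hm0 : ((m : ℂ) + 2 * h) ≠ 0 := hden m
        have hm1 : ((m : ℂ) + 1 + 2 * h) ≠ 0 := by
          have := hden (m + 1); push_cast at this
          intro hz; exact this (by linear_combination hz)
        match_scalars
        push_cast
        field_simp
        try ring
  have key2 : opComm (l0 h) F = F := by
    apply E_ext
    intro n
    simp only [opComm, LinearMap.sub_apply, Module.End.mul_apply, hF, map_smul, l0_pow,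
      smul_smul]
    match_scalars
    push_cast
    ring
  have key3 : opComm lm1 F = F ^ 2 := by
    apply E_ext
    intro n
    simp only [opComm, LinearMap.sub_apply, Module.End.mul_apply, pow_two, hF, map_smul,
      lm1_pow, smul_smul]
    have hm0 : ((n : ℂ) + 2 * h) ≠ 0 := hden n
    have hm1 : ((n : ℂ) + 1 + 2 * h) ≠ 0 := by
      have := hden (n + 1); push_cast at this
      intro hz; exact this (by linear_combination hz)
    match_scalars
    push_cast
    field_simp
    try ring
  refine ⟨⟨key1, key2, key3⟩, ?_⟩
  intro G ⟨hG1, hG0, _⟩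
  apply E_ext
  intro n
  induction n with
  | zero =>
      have he : l0 h (G (X ^ 0)) = (((0 : ℕ) : ℂ) + 1 + h) • G (X ^ 0) := by
        have h0 := congrArg (fun A : E => A (X ^ 0)) hG0
        simp only [opComm, LinearMap.sub_apply, Module.End.mul_apply] at h0
        rw [l0_pow, map_smul] at h0
        linear_combination (norm := module) h0
      have hq := Stmt1Aux.eigen h 0 (G (X ^ 0)) he
      have hl1 : l1 h (G (X ^ 0)) - G (l1 h (X ^ 0)) = X ^ 0 := by
        have := congrArg (fun A : E => A (X ^ 0)) hG1
        simpa only [opComm, LinearMap.sub_apply, Module.End.mul_apply,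
          Module.End.one_apply] using this
      rw [l1_pow_zero, map_zero, sub_zero, hq, map_smul, l1_pow h 0, smul_smul] at hl1
      have hcv := congrArg (fun p => Polynomial.coeff p 0) hl1
      simp only [coeff_smul, coeff_X_pow, smul_eq_mul] at hcv
      have hone : (G (X ^ 0)).coeff (0 + 1) * (((0 : ℕ) : ℂ) + 2 * h) = 1 := by
        push_cast at hcv ⊢
        linear_combination hcv
      have hcval := eq_inv_of_mul_eq_one_left hone
      rw [hq, hF 0]
      match_scalars
      push_cast at hcval ⊢
      linear_combination hcval
  | succ m ih =>
      have he : l0 h (G (X ^ (m + 1))) = (((m + 1 : ℕ) : ℂ) + 1 + h) • G (X ^ (m + 1)) := by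
        have h0 := congrArg (fun A : E => A (X ^ (m + 1))) hG0
        simp only [opComm, LinearMap.sub_apply, Module.End.mul_apply] at h0
        rw [l0_pow, map_smul] at h0
        linear_combination (norm := module) h0
      have hq := Stmt1Aux.eigen h (m + 1) (G (X ^ (m + 1))) he
      set c := (G (X ^ (m + 1))).coeff (m + 1 + 1) with hc
      have hl1 : l1 h (G (X ^ (m + 1))) - G (l1 h (X ^ (m + 1))) = X ^ (m + 1) := by
        have := congrArg (fun A : E => A (X ^ (m + 1))) hG1
        simpa only [opComm, LinearMap.sub_apply, Module.End.mul_apply,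
          Module.End.one_apply] using this
      rw [hq, map_smul, l1_pow h (m + 1), l1_pow h m, map_smul, ih, hF m,
        smul_smul, smul_smul] at hl1
      have hcv := congrArg (fun p => Polynomial.coeff p (m + 1)) hl1
      simp only [coeff_sub, coeff_smul, coeff_X_pow, smul_eq_mul, if_pos rfl] at hcv
      have hm0 : ((m : ℂ) + 2 * h) ≠ 0 := hden m
      have hinv : ((m : ℂ) + 2 * h) * ((m : ℂ) + 2 * h)⁻¹ = 1 := mul_inv_cancel₀ hm0
      have hne : ((m : ℂ) + 2) ≠ 0 := by
        have hnat : (((m + 2 : ℕ)) : ℂ) ≠ 0 := Nat.cast_ne_zero.2 (by omega)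
        intro hz; exact hnat (by push_cast; linear_combination hz)
      have hcv2 : c * (((m : ℂ) + 2) * ((m : ℂ) + 1 + 2 * h)) = (m : ℂ) + 2 := by
        push_cast at hcv
        linear_combination hcv + ((m : ℂ) + 1) * hinv
      have hone : c * (((m : ℂ) + 1 + 2 * h)) = 1 := by
        apply mul_left_cancel₀ hne
        linear_combination hcv2
      have hcval : c = (((m : ℂ) + 1 + 2 * h))⁻¹ := eq_inv_of_mul_eq_one_left hone
      rw [hq, hF (m + 1)]
      match_scalars
      push_cast
      linear_combination hcval

end
end

section
/- Let h be a real number with h ≠ −k/2 for every integer k ≥ 0. Then the operators D and F on ℂ[z] satisfy the Lobachevskii–Berezin relations [F∘D, D∘F] = 0 and (2h−1)·[D, F] = (id − D∘F)∘(id − F∘D); in particular, if h ≠ 1/2 then [D, F] = q_R·(id − D∘F)∘(id − F∘D) with q_R = 1/(2h−1). -/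
open Polynomial

noncomputable section

lemma end_ext {A B : E} (H : ∀ n : ℕ, A (X ^ n) = B (X ^ n)) : A = B := by
  apply LinearMap.ext
  intro p
  induction p using Polynomial.induction_on' with
  | add p q hp hq => simp [map_add, hp, hq]
  | monomial n a =>
      rw [← Polynomial.C_mul_X_pow_eq_monomial, ← Polynomial.smul_eq_C_mul,
        map_smul, map_smul, H n]

/-- For nondegenerate extremal weight `h`, the operators `D` and `F`
satisfy the Lobachevskii–Berezin relations `[F∘D, D∘F] = 0` and
`(2h−1)·[D,F] = (id − D∘F)∘(id − F∘D)`; in particular for `h ≠ 1/2`,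
`[D,F] = q_R·(id − D∘F)∘(id − F∘D)` with `q_R = 1/(2h−1)`. -/
theorem stmt_2 (h : ℝ) (hh : ∀ k : ℕ, h ≠ -(k : ℝ) / 2)
    (F : E) (hF : ∀ n : ℕ, F (X ^ n) = (((n : ℂ) + 2 * h)⁻¹) • X ^ (n + 1)) :
    opComm (F * Dop) (Dop * F) = 0 ∧
    ((2 * h - 1 : ℝ) : ℂ) • opComm Dop F = (1 - Dop * F) * (1 - F * Dop) ∧
    (h ≠ 1 / 2 →
      opComm Dop F = (((2 * h - 1 : ℝ)⁻¹ : ℝ) : ℂ) • ((1 - Dop * F) * (1 - F * Dop))) := by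
  have hne : ∀ n : ℕ, ((n : ℂ) + 2 * (h : ℂ)) ≠ 0 := by
    intro n hn
    apply hh n
    have h2 : (((n : ℝ) + 2 * h : ℝ) : ℂ) = 0 := by push_cast; push_cast at hn; linear_combination hn
    have h3 : ((n : ℝ) + 2 * h) = 0 := by exact_mod_cast h2
    linarith
  have hDs : ∀ n : ℕ, Dop ((X : Polynomial ℂ) ^ (n + 1)) = ((n : ℂ) + 1) • X ^ n := by
    intro n
    show Polynomial.derivative ((X : Polynomial ℂ) ^ (n + 1)) = ((n : ℂ) + 1) • X ^ n
    rw [Polynomial.derivative_X_pow, Polynomial.smul_eq_C_mul]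
    push_cast
    simp
  have hD0 : Dop ((X : Polynomial ℂ) ^ 0) = 0 := by
    show Polynomial.derivative ((X : Polynomial ℂ) ^ 0) = 0
    simp
  have hDF : ∀ n : ℕ, (Dop * F) (X ^ n) = (((n : ℂ) + 1) * ((n : ℂ) + 2 * h)⁻¹) • X ^ n := by
    intro n
    rw [Module.End.mul_apply, hF n, map_smul, hDs n, smul_smul]
    ring_nf
  have hFD0 : (F * Dop) ((X : Polynomial ℂ) ^ 0) = 0 := by
    rw [Module.End.mul_apply, hD0, map_zero]
  have hFDs : ∀ n : ℕ, (F * Dop) (X ^ (n + 1)) =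
      (((n : ℂ) + 1) * ((n : ℂ) + 2 * h)⁻¹) • X ^ (n + 1) := by
    intro n
    rw [Module.End.mul_apply, hDs n, map_smul, hF n, smul_smul]
  have rel1 : opComm (F * Dop) (Dop * F) = 0 := by
    apply end_ext
    intro n
    simp only [opComm, LinearMap.sub_apply, LinearMap.zero_apply]
    cases n with
    | zero =>
        rw [Module.End.mul_apply, hDF 0, map_smul, hFD0, smul_zero,
          Module.End.mul_apply, hFD0, map_zero, sub_zero]
    | succ m =>
        simp only [Module.End.mul_apply]
        simp only [hF, map_smul, hDs, smul_smul, hD0]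
        match_scalars
        push_cast
        ring
  have rel2 : ((2 * h - 1 : ℝ) : ℂ) • opComm Dop F = (1 - Dop * F) * (1 - F * Dop) := by
    apply end_ext
    intro n
    cases n with
    | zero =>
        simp only [opComm, LinearMap.smul_apply, LinearMap.sub_apply, Module.End.mul_apply,
          Module.End.one_apply, hF, map_smul, hDs, smul_smul, hD0, map_zero, sub_zero,
          smul_zero]
        have h0 := hne 0
        push_cast at h0
        have hh0 : (h : ℂ) ≠ 0 := fun hz => h0 (by rw [hz]; ring)
        match_scalars
        push_cast
        field_simp
        ring
    | succ m =>
        simp only [opComm, LinearMap.smul_apply, LinearMap.sub_apply, Module.End.mul_apply,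
          Module.End.one_apply, hF, map_smul, hDs, smul_smul, map_sub, hD0]
        have h1 := hne m
        have h2 := hne (m + 1)
        push_cast at h1 h2
        match_scalars
        push_cast
        field_simp
        ring
  refine ⟨rel1, rel2, fun hhalf => ?_⟩
  have hne2 : ((2 * h - 1 : ℝ) : ℂ) ≠ 0 := by
    simp only [ne_eq, Complex.ofReal_eq_zero]
    intro hz
    apply hhalf
    linarith
  rw [← rel2, smul_smul]
  rw [show (((2 * h - 1 : ℝ)⁻¹ : ℝ) : ℂ) = (((2 * h - 1 : ℝ) : ℂ))⁻¹ from Complex.ofReal_inv _,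
    inv_mul_cancel₀ hne2, one_smul]

end
end

section
/- Let h > 0. Then on the unitarizable Verma module the operators D and F are mutually adjoint and bounded: ⟨D p, q⟩ = ⟨p, F q⟩ for all p, q ∈ ℂ[z], and there is a constant C > 0 (one may take C = max(1, (2h)^{−1/2})) such that ‖D p‖ ≤ C·‖p‖ and ‖F p‖ ≤ C·‖p‖ for all p ∈ ℂ[z]. -/
open Polynomial

noncomputable section

/-- For `h > 0`, on the unitarizable Verma module (with the hermitian inner
product `B` for which the monomials are orthogonal and `⟨zⁿ,zⁿ⟩ = n!(2h)(2h+1)⋯(2h+n−1)`),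
the operators `D` and `F` are mutually adjoint: `⟨D p, q⟩ = ⟨p, F q⟩`, and bounded with
constant `C = max(1, (2h)^{−1/2})`. -/
theorem stmt_3 (h : ℝ) (hpos : 0 < h)
    (F : E) (hF : ∀ n : ℕ, F (X ^ n) = (((n : ℂ) + 2 * h)⁻¹) • X ^ (n + 1))
    (B : Polynomial ℂ → Polynomial ℂ → ℂ)
    (hB_addl : ∀ p q r : Polynomial ℂ, B (p + q) r = B p r + B q r)
    (hB_smull : ∀ (a : ℂ) (p q : Polynomial ℂ), B (a • p) q = a * B p q)
    (hB_addr : ∀ p q r : Polynomial ℂ, B p (q + r) = B p q + B p r)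
    (hB_smulr : ∀ (a : ℂ) (p q : Polynomial ℂ), B p (a • q) = (starRingEnd ℂ) a * B p q)
    (hB_orth : ∀ m n : ℕ, m ≠ n → B (X ^ m) (X ^ n) = 0)
    (hB_diag : ∀ n : ℕ, B (X ^ n) (X ^ n) = ((w h n : ℝ) : ℂ)) :
    (∀ p q : Polynomial ℂ, B (Dop p) q = B p (F q)) ∧
    (∃ C : ℝ, 0 < C ∧ C = max 1 (Real.sqrt (2 * h))⁻¹ ∧
      ∀ p : Polynomial ℂ,
        Real.sqrt (B (Dop p) (Dop p)).re ≤ C * Real.sqrt (B p p).re ∧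
        Real.sqrt (B (F p) (F p)).re ≤ C * Real.sqrt (B p p).re) := by
  classical
  have h2 : (0:ℝ) < 2 * h := by linarith
  -- positivity of the weights
  have hwpos : ∀ n, 0 < w h n := by
    intro n
    unfold w
    apply mul_pos
    · exact_mod_cast Nat.factorial_pos n
    · exact Finset.prod_pos (fun i _ => by positivity)
  have hwsucc : ∀ n : ℕ, w h (n+1) = ((n:ℝ)+1) * (2*h + n) * w h n := by
    intro n
    unfold w
    rw [Finset.prod_range_succ, Nat.factorial_succ]
    push_cast
    ring
  set C2 : ℝ := max 1 (2*h)⁻¹ with hC2def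
  have hC2pos : 0 < C2 := lt_of_lt_of_le one_pos (le_max_left _ _)
  have hkey : ∀ n : ℕ, ((n:ℝ)+1) ≤ C2 * (2*h + n) := by
    intro n
    have hn : (0:ℝ) ≤ (n:ℝ) := Nat.cast_nonneg n
    rcases le_total 1 (2*h) with h1 | h1
    · have hc : (1:ℝ) ≤ C2 := le_max_left _ _
      nlinarith
    · have hc : (2*h)⁻¹ ≤ C2 := le_max_right _ _
      have h3 : ((n:ℝ)+1) ≤ (2*h)⁻¹ * (2*h + n) := by
        rw [le_inv_mul_iff₀ h2]
        nlinarith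
      have h4 : (2*h)⁻¹ * (2*h + n) ≤ C2 * (2*h + n) :=
        mul_le_mul_of_nonneg_right hc (by linarith)
      linarith
  have hsqrt_mono : Monotone Real.sqrt := fun a b hab => Real.sqrt_le_sqrt hab
  have hsqrtC2 : Real.sqrt C2 = max 1 (Real.sqrt (2*h))⁻¹ := by
    rw [hC2def, hsqrt_mono.map_max, Real.sqrt_one, Real.sqrt_inv]
  -- sesquilinear machinery
  let Bl : Polynomial ℂ → Polynomial ℂ →ₗ[ℂ] ℂ := fun q =>
    { toFun := fun p => B p q
      map_add' := fun p r => hB_addl p r q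
      map_smul' := fun a p => hB_smull a p q }
  let Br : Polynomial ℂ → Polynomial ℂ →ₗ[ℂ] ℂ := fun p =>
    { toFun := fun q => (starRingEnd ℂ) (B p q)
      map_add' := fun q r => by simp [hB_addr]
      map_smul' := fun a q => by simp [hB_smulr] }
  have hsuml : ∀ (s : Finset ℕ) (f : ℕ → Polynomial ℂ) (q : Polynomial ℂ),
      B (∑ i ∈ s, f i) q = ∑ i ∈ s, B (f i) q := fun s f q => map_sum (Bl q) f s
  have hsumr : ∀ (s : Finset ℕ) (f : ℕ → Polynomial ℂ) (p : Polynomial ℂ),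
      B p (∑ i ∈ s, f i) = ∑ i ∈ s, B p (f i) := by
    intro s f p
    have h1 : (starRingEnd ℂ) (B p (∑ i ∈ s, f i))
        = ∑ i ∈ s, (starRingEnd ℂ) (B p (f i)) := map_sum (Br p) f s
    have h2' := congrArg (starRingEnd ℂ) h1
    simpa using h2'
  -- representation of a polynomial as a sum of monomials
  have hrep : ∀ (r : Polynomial ℂ) (N : ℕ), r.natDegree < N →
      r = ∑ n ∈ Finset.range N, r.coeff n • X ^ n := by
    intro r N hN
    conv_lhs => rw [r.as_sum_range' N hN]
    simp [← Polynomial.smul_X_eq_monomial]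
  -- expansion of B on sums of (shifted) monomials
  have hBexpS : ∀ (N s : ℕ) (c d : ℕ → ℂ),
      B (∑ n ∈ Finset.range N, c n • X ^ (n + s)) (∑ n ∈ Finset.range N, d n • X ^ (n + s))
        = ∑ n ∈ Finset.range N, c n * (starRingEnd ℂ) (d n) * ((w h (n + s) : ℝ) : ℂ) := by
    intro N s c d
    rw [hsuml]
    refine Finset.sum_congr rfl fun m hm => ?_
    rw [hB_smull, hsumr]
    rw [Finset.sum_eq_single_of_mem m hm (fun n _ hnm => by
      rw [hB_smulr, hB_orth (m+s) (n+s) (by omega), mul_zero])]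
    rw [hB_smulr, hB_diag]
    ring
  have hBreS : ∀ (N s : ℕ) (c : ℕ → ℂ),
      (B (∑ n ∈ Finset.range N, c n • X ^ (n + s)) (∑ n ∈ Finset.range N, c n • X ^ (n + s))).re
        = ∑ n ∈ Finset.range N, Complex.normSq (c n) * w h (n + s) := by
    intro N s c
    rw [hBexpS, Complex.re_sum]
    refine Finset.sum_congr rfl fun n _ => ?_
    rw [Complex.mul_conj, ← Complex.ofReal_mul, Complex.ofReal_re]
  have hBre0 : ∀ (N : ℕ) (c : ℕ → ℂ),
      (B (∑ n ∈ Finset.range N, c n • X ^ n) (∑ n ∈ Finset.range N, c n • X ^ n)).re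
        = ∑ n ∈ Finset.range N, Complex.normSq (c n) * w h n := by
    intro N c
    simpa using hBreS N 0 c
  -- derivative on monomials
  have hDmono : ∀ m : ℕ, Dop (X ^ m : Polynomial ℂ) = ((m : ℕ) : ℂ) • X ^ (m - 1) := by
    intro m
    show Polynomial.derivative (X ^ m : Polynomial ℂ) = _
    rw [Polynomial.derivative_X_pow, Polynomial.smul_eq_C_mul]
  have hposn : ∀ n : ℕ, (0:ℝ) < (n:ℝ) + 2*h := by
    intro n
    have := Nat.cast_nonneg (α := ℝ) n
    linarith
  have hconj_inv : ∀ n : ℕ, (starRingEnd ℂ) (((n : ℂ) + 2 * (h:ℂ))⁻¹)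
      = ((((n : ℝ) + 2 * h)⁻¹ : ℝ) : ℂ) := by
    intro n
    rw [show ((n : ℂ) + 2 * (h:ℂ)) = ((((n:ℝ) + 2*h) : ℝ) : ℂ) by push_cast; ring]
    rw [map_inv₀, Complex.conj_ofReal, Complex.ofReal_inv]
  -- adjointness on monomials
  have hadj_mono : ∀ m n : ℕ, B (Dop (X ^ m)) (X ^ n) = B (X ^ m) (F (X ^ n)) := by
    intro m n
    rw [hDmono m, hF n, hB_smull, hB_smulr, hconj_inv n]
    by_cases hmn : m = n + 1
    · subst hmn
      simp only [Nat.add_sub_cancel]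
      rw [hB_diag, hB_diag]
      have hreal : ((n:ℝ) + 1) * w h n = (((n : ℝ) + 2 * h)⁻¹) * w h (n + 1) := by
        rw [hwsucc n]
        have hne := (hposn n).ne'
        field_simp
        ring
      push_cast
      have hc := congrArg (Complex.ofReal) hreal
      push_cast at hc
      linear_combination hc
    · have hR : B (X ^ m) (X ^ (n+1)) = 0 := hB_orth _ _ hmn
      rw [hR, mul_zero]
      rcases m with _ | m'
      · simp
      · have hL : B (X ^ (m' + 1 - 1)) (X ^ n) = (0:ℂ) := by
          rw [Nat.add_sub_cancel]
          exact hB_orth m' n (by omega)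
        rw [hL, mul_zero]
  -- general adjointness
  have hadj : ∀ p q : Polynomial ℂ, B (Dop p) q = B p (F q) := by
    intro p q
    have hp := hrep p (p.natDegree + 1) (Nat.lt_succ_self _)
    have hq := hrep q (q.natDegree + 1) (Nat.lt_succ_self _)
    rw [hp, hq]
    simp only [map_sum, map_smul, hsuml, hsumr, hB_smull, hB_smulr]
    simp only [hadj_mono]
  refine ⟨hadj, max 1 (Real.sqrt (2*h))⁻¹, lt_of_lt_of_le one_pos (le_max_left _ _), rfl, ?_⟩
  intro p
  set N := p.natDegree + 1 with hNdef
  have hpN : p.natDegree < N := Nat.lt_succ_self _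
  have hp := hrep p N hpN
  have hBpp : (B p p).re = ∑ n ∈ Finset.range N, Complex.normSq (p.coeff n) * w h n := by
    conv_lhs => rw [hp]
    exact hBre0 N _
  have hBpp_nonneg : 0 ≤ (B p p).re := by
    rw [hBpp]
    exact Finset.sum_nonneg fun n _ => mul_nonneg (Complex.normSq_nonneg _) (hwpos n).le
  -- bound for D
  have hdN : (Dop p).natDegree < N := by
    have h1 : (Dop p) = Polynomial.derivative p := rfl
    rw [h1]
    exact lt_of_le_of_lt (le_trans (Polynomial.natDegree_derivative_le p) (Nat.sub_le _ _)) hpN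
  have hdp := hrep (Dop p) N hdN
  have hBDD : (B (Dop p) (Dop p)).re
      = ∑ n ∈ Finset.range N, Complex.normSq (p.coeff (n+1) * ((n:ℂ)+1)) * w h n := by
    conv_lhs => rw [hdp]
    rw [hBre0 N _]
    refine Finset.sum_congr rfl fun n _ => ?_
    congr 2
    exact Polynomial.coeff_derivative p n
  have hDle : (B (Dop p) (Dop p)).re ≤ C2 * (B p p).re := by
    rw [hBDD, hBpp]
    have step1 : ∀ n ∈ Finset.range N,
        Complex.normSq (p.coeff (n+1) * ((n:ℂ)+1)) * w h n
          ≤ C2 * (Complex.normSq (p.coeff (n+1)) * w h (n+1)) := by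
      intro n _
      rw [Complex.normSq_mul, hwsucc n]
      have hn1 : Complex.normSq ((n:ℂ)+1) = ((n:ℝ)+1) * ((n:ℝ)+1) := by
        rw [show ((n:ℂ)+1) = (((n:ℝ)+1 : ℝ) : ℂ) by push_cast; ring, Complex.normSq_ofReal]
      rw [hn1]
      have hn : (0:ℝ) ≤ (n:ℝ) := Nat.cast_nonneg n
      have h0 : 0 ≤ Complex.normSq (p.coeff (n+1)) * (((n:ℝ)+1) * w h n) :=
        mul_nonneg (Complex.normSq_nonneg _) (mul_nonneg (by linarith) (hwpos n).le)
      nlinarith [mul_le_mul_of_nonneg_left (hkey n) h0]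
    calc ∑ n ∈ Finset.range N, Complex.normSq (p.coeff (n+1) * ((n:ℂ)+1)) * w h n
        ≤ ∑ n ∈ Finset.range N, C2 * (Complex.normSq (p.coeff (n+1)) * w h (n+1)) :=
          Finset.sum_le_sum step1
      _ = C2 * ∑ n ∈ Finset.range N, Complex.normSq (p.coeff (n+1)) * w h (n+1) := by
          rw [Finset.mul_sum]
      _ ≤ C2 * ∑ n ∈ Finset.range N, Complex.normSq (p.coeff n) * w h n := by
          refine mul_le_mul_of_nonneg_left ?_ hC2pos.le
          have hNzero : Complex.normSq (p.coeff N) * w h N = 0 := by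
            rw [Polynomial.coeff_eq_zero_of_natDegree_lt hpN]
            simp
          have e1 := Finset.sum_range_succ' (fun n => Complex.normSq (p.coeff n) * w h n) N
          have e2 : ∑ n ∈ Finset.range (N+1), Complex.normSq (p.coeff n) * w h n
              = ∑ n ∈ Finset.range N, Complex.normSq (p.coeff n) * w h n := by
            rw [Finset.sum_range_succ, hNzero, add_zero]
          have h0 : 0 ≤ Complex.normSq (p.coeff 0) * w h 0 :=
            mul_nonneg (Complex.normSq_nonneg _) (hwpos 0).le
          linarith
  -- bound for F
  have hFrep : F p = ∑ n ∈ Finset.range N, ((((n:ℂ) + 2*(h:ℂ))⁻¹) * p.coeff n) • X ^ (n+1) := by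
    conv_lhs => rw [hp]
    rw [map_sum]
    refine Finset.sum_congr rfl fun n _ => ?_
    rw [map_smul, hF n, smul_smul, mul_comm]
  have hBFF : (B (F p) (F p)).re
      = ∑ n ∈ Finset.range N, Complex.normSq ((((n:ℂ)+2*(h:ℂ))⁻¹) * p.coeff n) * w h (n+1) := by
    rw [hFrep]
    exact hBreS N 1 _
  have hFle : (B (F p) (F p)).re ≤ C2 * (B p p).re := by
    rw [hBFF, hBpp, Finset.mul_sum]
    refine Finset.sum_le_sum fun n _ => ?_
    rw [Complex.normSq_mul, hwsucc n]
    have ht : (0:ℝ) < 2*h + n := by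
      have := Nat.cast_nonneg (α := ℝ) n; linarith
    have hninv : Complex.normSq (((n:ℂ)+2*(h:ℂ))⁻¹) = ((2*h + (n:ℝ)) * (2*h + n))⁻¹ := by
      rw [show ((n:ℂ)+2*(h:ℂ)) = (((2*h + (n:ℝ)) : ℝ) : ℂ) by push_cast; ring]
      rw [Complex.normSq_inv, Complex.normSq_ofReal]
    rw [hninv]
    have hs := Complex.normSq_nonneg (p.coeff n)
    have hwn := (hwpos n).le
    have hfrac : ((2*h + (n:ℝ)) * (2*h + n))⁻¹ * (((n:ℝ)+1) * (2*h+n)) ≤ C2 := by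
      have heq : ((2*h + (n:ℝ)) * (2*h + n))⁻¹ * (((n:ℝ)+1) * (2*h+n)) = ((n:ℝ)+1) / (2*h+n) := by
        field_simp
      rw [heq, div_le_iff₀ ht]
      exact hkey n
    have hmain := mul_le_mul_of_nonneg_right hfrac (mul_nonneg hs hwn)
    nlinarith [hmain]
  have hsqrt : ∀ x : ℝ, x ≤ C2 * (B p p).re →
      Real.sqrt x ≤ (max 1 (Real.sqrt (2*h))⁻¹) * Real.sqrt (B p p).re := by
    intro x hx
    calc Real.sqrt x ≤ Real.sqrt (C2 * (B p p).re) := Real.sqrt_le_sqrt hx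
      _ = Real.sqrt C2 * Real.sqrt (B p p).re := Real.sqrt_mul hC2pos.le _
      _ = _ := by rw [hsqrtC2]
  exact ⟨hsqrt _ hDle, hsqrt _ hFle⟩

end
end

section
/- Let h be a real number with h ≠ −k/2 for every integer k ≥ 0. If B : ℂ[z] × ℂ[z] → ℂ is a sesquilinear form (linear in the first argument, conjugate-linear in the second) satisfying B(l_i p, q) = B(p, l₋ᵢ q) for all i ∈ {−1, 0, 1} and all p, q ∈ ℂ[z], and normalized by B(1, 1) = 1, then B(z^m, zⁿ) = 0 for m ≠ n and B(zⁿ, zⁿ) = n!·(2h)(2h+1)⋯(2h+n−1) for all n ≥ 0; moreover this form B is positive definite if and only if h > 0 (the unitarizable case). -/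
open Polynomial

noncomputable section

lemma lm1_pow (n : ℕ) : lm1 (X ^ n : Polynomial ℂ) = X ^ (n+1) := by
  simp [lm1, Mz, pow_succ, mul_comm]

lemma l0_pow (h : ℝ) (n : ℕ) : l0 h (X ^ n : Polynomial ℂ) = ((n : ℂ) + h) • X ^ n := by
  cases n with
  | zero => simp [l0, Mz, Dop, Module.End.mul_apply]
  | succ m =>
    simp [l0, Mz, Dop, Module.End.mul_apply, derivative_X_pow, smul_eq_C_mul]
    ring

lemma l1_pow (h : ℝ) (n : ℕ) :
    l1 h (X ^ (n+1) : Polynomial ℂ) = (((n:ℂ)+1) * ((n:ℂ) + 2*h)) • X ^ n := by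
  cases n with
  | zero => simp [l1, Mz, Dop, Module.End.mul_apply, pow_two]
  | succ m =>
    simp [l1, Mz, Dop, Module.End.mul_apply, pow_two, derivative_X_pow, smul_eq_C_mul]
    ring

lemma w_succ (h : ℝ) (n : ℕ) : w h (n+1) = ((n:ℝ)+1) * ((n:ℝ) + 2*h) * w h n := by
  simp [w, Finset.prod_range_succ, Nat.factorial_succ]
  push_cast
  ring

lemma w_pos (h : ℝ) (hp : 0 < h) (n : ℕ) : 0 < w h n := by
  apply mul_pos
  · exact_mod_cast Nat.factorial_pos n
  · exact Finset.prod_pos fun i _ => by positivity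

/-- For nondegenerate extremal weight `h`, any sesquilinear form `B` on `ℂ[z]`
(linear in the first, conjugate-linear in the second argument) with `B(lᵢ p, q) = B(p, l₋ᵢ q)`
for `i ∈ {−1,0,1}` and `B(1,1) = 1` satisfies `B(z^m, zⁿ) = 0` for `m ≠ n` and
`B(zⁿ, zⁿ) = n!(2h)(2h+1)⋯(2h+n−1)`; moreover `B` is positive definite iff `h > 0`. -/
theorem stmt_4 (h : ℝ) (hh : ∀ k : ℕ, h ≠ -(k : ℝ) / 2)
    (B : Polynomial ℂ → Polynomial ℂ → ℂ)
    (hB_addl : ∀ p q r : Polynomial ℂ, B (p + q) r = B p r + B q r)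
    (hB_smull : ∀ (a : ℂ) (p q : Polynomial ℂ), B (a • p) q = a * B p q)
    (hB_addr : ∀ p q r : Polynomial ℂ, B p (q + r) = B p q + B p r)
    (hB_smulr : ∀ (a : ℂ) (p q : Polynomial ℂ), B p (a • q) = (starRingEnd ℂ) a * B p q)
    (hB_m1 : ∀ p q : Polynomial ℂ, B (lm1 p) q = B p (l1 h q))
    (hB_0 : ∀ p q : Polynomial ℂ, B (l0 h p) q = B p (l0 h q))
    (hB_1 : ∀ p q : Polynomial ℂ, B (l1 h p) q = B p (lm1 q))
    (hB_norm : B 1 1 = 1) :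
    (∀ m n : ℕ, m ≠ n → B (X ^ m) (X ^ n) = 0) ∧
    (∀ n : ℕ, B (X ^ n) (X ^ n) = ((w h n : ℝ) : ℂ)) ∧
    ((∀ p : Polynomial ℂ, p ≠ 0 → 0 < (B p p).re ∧ (B p p).im = 0) ↔ 0 < h) := by
  -- off-diagonal vanishing
  have hoff : ∀ m n : ℕ, m ≠ n → B (X ^ m) (X ^ n) = 0 := by
    intro m n hmn
    have e := hB_0 (X ^ m) (X ^ n)
    rw [l0_pow, l0_pow, hB_smull, hB_smulr] at e
    have hc : (starRingEnd ℂ) ((n : ℂ) + (h:ℂ)) = (n : ℂ) + (h:ℂ) := by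
      simp [Complex.conj_ofReal]
    rw [hc] at e
    have hne : (m : ℂ) ≠ (n : ℂ) := by exact_mod_cast hmn
    have : ((m : ℂ) - (n : ℂ)) * B (X ^ m) (X ^ n) = 0 := by ring_nf; linear_combination e
    rcases mul_eq_zero.1 this with h' | h'
    · exact absurd (sub_eq_zero.1 h') hne
    · exact h'
  -- diagonal values
  have hdiag : ∀ n : ℕ, B (X ^ n) (X ^ n) = ((w h n : ℝ) : ℂ) := by
    intro n
    induction n with
    | zero => simpa [w] using hB_norm
    | succ m ih =>
      have e := hB_m1 (X ^ m) (X ^ (m+1))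
      rw [lm1_pow, l1_pow, hB_smulr] at e
      have hc : (((m:ℂ)+1) * ((m:ℂ) + 2*(h:ℂ))) = ((((m:ℝ)+1) * ((m:ℝ) + 2*h) : ℝ) : ℂ) := by
        push_cast; ring
      rw [hc, Complex.conj_ofReal, ih] at e
      rw [e, w_succ]
      push_cast
      ring
  refine ⟨hoff, hdiag, ?_⟩
  -- sum expansion helpers
  have hB0l : ∀ q, B 0 q = 0 := by
    intro q
    have := hB_smull 0 0 q
    simpa using this
  have hsum_l : ∀ (s : Finset ℕ) (q : Polynomial ℂ),
      ∀ f : ℕ → ℂ, B (∑ n ∈ s, f n • X ^ n) q = ∑ n ∈ s, f n * B (X ^ n) q := by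
    intro s
    induction s using Finset.induction_on with
    | empty => intro q f; simpa using hB0l q
    | insert _ _ hns ih =>
      intro q f
      rw [Finset.sum_insert hns, Finset.sum_insert hns, hB_addl, hB_smull, ih]
  have hB0r : ∀ p, B p 0 = 0 := by
    intro p
    have := hB_smulr 0 p 0
    simpa using this
  have hsum_r : ∀ (s : Finset ℕ) (p : Polynomial ℂ),
      ∀ f : ℕ → ℂ, B p (∑ n ∈ s, f n • X ^ n) = ∑ n ∈ s, (starRingEnd ℂ) (f n) * B p (X ^ n) := by
    intro s
    induction s using Finset.induction_on with
    | empty => intro p f; simpa using hB0r p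
    | insert _ _ hns ih =>
      intro p f
      rw [Finset.sum_insert hns, Finset.sum_insert hns, hB_addr, hB_smulr, ih]
  -- value of B p p
  have hBpp : ∀ p : Polynomial ℂ,
      B p p = ((∑ n ∈ p.support, Complex.normSq (p.coeff n) * w h n : ℝ) : ℂ) := by
    intro p
    have hrep : p = ∑ n ∈ p.support, p.coeff n • X ^ n := by
      conv_lhs => rw [p.as_sum_support]
      refine Finset.sum_congr rfl fun n _ => ?_
      rw [smul_eq_C_mul, C_mul_X_pow_eq_monomial]
    conv_lhs => rw [hrep]
    rw [hsum_l]
    have : ∀ m ∈ p.support,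
        p.coeff m * B (X ^ m) (∑ n ∈ p.support, p.coeff n • X ^ n)
          = ((Complex.normSq (p.coeff m) * w h m : ℝ) : ℂ) := by
      intro m hm
      rw [hsum_r]
      rw [Finset.sum_eq_single m]
      · rw [hdiag m, mul_comm ((starRingEnd ℂ) (p.coeff m)) _, Complex.ofReal_mul,
          ← Complex.mul_conj]
        ring
      · intro n _ hne
        rw [hoff m n (fun e => hne e.symm)]
        ring
      · intro hms; exact absurd hm hms
    rw [Finset.sum_congr rfl this, Complex.ofReal_sum]
  constructor
  · intro hpd
    have hx : (X : Polynomial ℂ) ≠ 0 := X_ne_zero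
    have := (hpd X hx).1
    have hX1 : B X X = ((w h 1 : ℝ) : ℂ) := by
      have := hdiag 1
      simpa using this
    rw [hX1] at this
    simp [w] at this
    linarith [this]
  · intro hp p hne
    rw [hBpp p]
    constructor
    · rw [Complex.ofReal_re]
      apply Finset.sum_pos
      · intro n hn
        exact mul_pos (Complex.normSq_pos.2 (mem_support_iff.1 hn)) (w_pos h hp n)
      · exact Polynomial.support_nonempty.2 hne
    · simp

end
end

section
/- Let h be a real number with h ≠ −k/2 for every integer k ≥ 0. Then the q_R-conformal symmetries satisfy the Witt algebra relations on each half: [L_n, L_m] = (n − m)·L_{n+m} on ℂ[z] whenever n, m ≥ −1, and also whenever n, m ≤ 1. -/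
open Polynomial

noncomputable section

/-! ### Auxiliary machinery -/

lemma ext_basis {A B : E} (hab : ∀ n : ℕ, A (X ^ n) = B (X ^ n)) : A = B := by
  apply Polynomial.lhom_ext'
  intro n
  apply LinearMap.ext_ring
  simpa [Polynomial.monomial_one_right_eq_X_pow] using hab n

lemma DMz : Dop * Mz = Mz * Dop + 1 := by
  apply LinearMap.ext; intro p
  simp [Dop, Mz, Module.End.mul_apply, derivative_mul, mul_comm]

lemma Dpow_swap : ∀ k : ℕ, Dop ^ (k+1) * Mz = Mz * Dop ^ (k+1) + ((k:ℂ)+1) • Dop ^ k := by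
  intro k
  induction k with
  | zero => simpa using DMz
  | succ k ih =>
      have h0 : Dop ^ (k+2) * Mz = Dop * (Dop ^ (k+1) * Mz) := by
        rw [← mul_assoc, ← pow_succ']
      rw [h0, ih, mul_add, ← mul_assoc, DMz, mul_smul_comm, add_mul, one_mul]
      have h1 : Mz * Dop * Dop ^ (k+1) = Mz * Dop ^ (k+2) := by
        rw [mul_assoc, ← pow_succ']
      have h2 : Dop * Dop ^ k = Dop ^ (k+1) := by rw [← pow_succ']
      rw [h1, h2]
      push_cast
      module

lemma Dpow_swap' : ∀ k : ℕ, Dop ^ k * Mz = Mz * Dop ^ k + (k:ℂ) • Dop ^ (k-1) := by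
  intro k
  cases k with
  | zero => simp
  | succ k => simpa using Dpow_swap k

/-- The operator `L_k` for `k ≥ 0`. -/
def Aop (h : ℝ) (k : ℕ) : E := Mz * Dop ^ (k + 1) + (((k : ℂ) + 1) * (h : ℂ)) • Dop ^ k

lemma t1 (x y : ℕ) : (Mz * Dop^(x+1)) * (Mz * Dop^(y+1))
    = Mz*Mz*Dop^(x+y+2) + ((x:ℂ)+1) • (Mz * Dop^(x+y+1)) := by
  rw [← mul_assoc, mul_assoc Mz (Dop^(x+1)) Mz, Dpow_swap x, mul_add, mul_smul_comm,
    add_mul, smul_mul_assoc, ← mul_assoc, mul_assoc (Mz*Mz), ← pow_add,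
    mul_assoc Mz (Dop^x), ← pow_add]
  have e1 : x+1+(y+1) = x+y+2 := by omega
  have e2 : x+(y+1) = x+y+1 := by omega
  rw [e1, e2]

lemma t3 (x y : ℕ) : (Dop^x) * (Mz * Dop^(y+1)) = Mz * Dop^(x+y+1) + (x:ℂ) • Dop^(x+y) := by
  rw [← mul_assoc, Dpow_swap' x, add_mul, smul_mul_assoc, mul_assoc, ← pow_add]
  have e2 : x+(y+1) = x+y+1 := by omega
  rw [e2]
  congr 1
  cases x with
  | zero => simp
  | succ x =>
      congr 1
      rw [← pow_add]
      congr 1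
      omega

lemma expandA (h : ℝ) (x y : ℕ) : Aop h x * Aop h y
    = Mz*Mz*Dop^(x+y+2)
      + (((x:ℂ)+1) + ((y:ℂ)+1)*(h:ℂ) + ((x:ℂ)+1)*(h:ℂ)) • (Mz * Dop^(x+y+1))
      + ((((x:ℂ)+1)*(h:ℂ))*(x:ℂ) + (((x:ℂ)+1)*(h:ℂ))*(((y:ℂ)+1)*(h:ℂ))) • Dop^(x+y) := by
  unfold Aop
  rw [add_mul, mul_add, mul_add, t1, mul_smul_comm, smul_mul_assoc, t3, smul_mul_assoc,
    mul_smul_comm, smul_smul, mul_assoc Mz (Dop^(x+1)), ← pow_add, ← pow_add, smul_add, smul_smul]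
  have e1 : x+1+y = x+y+1 := by omega
  rw [e1]
  module

lemma commA (h : ℝ) (a b : ℕ) :
    opComm (Aop h a) (Aop h b) = ((a:ℂ) - (b:ℂ)) • Aop h (a+b) := by
  rw [opComm, expandA, expandA, Nat.add_comm b a, Aop]
  match_scalars <;> ring

lemma commQ (h : ℝ) (a : ℕ) :
    opComm (Aop h a) Mz
      = ((a:ℂ)+1) • (Mz * Dop^a) + ((((a:ℂ)+1)*(h:ℂ))*(a:ℂ)) • Dop^(a-1) := by
  rw [opComm, Aop]
  simp only [add_mul, smul_mul_assoc, mul_add, mul_smul_comm]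
  rw [mul_assoc Mz (Dop^(a+1)) Mz, Dpow_swap a, Dpow_swap' a]
  simp only [mul_add, mul_smul_comm, smul_add, smul_smul]
  module

lemma MzX (n : ℕ) : Mz (X^n : Polynomial ℂ) = X^(n+1) := by
  show X * X^n = X^(n+1)
  rw [pow_succ, mul_comm]

lemma DX (t : ℕ) : Dop (X^(t+1) : Polynomial ℂ) = ((t:ℂ)+1) • X^t := by
  show derivative (X^(t+1) : Polynomial ℂ) = ((t:ℂ)+1) • X^t
  rw [derivative_X_pow, smul_eq_C_mul]
  push_cast
  simp

lemma Done : Dop (1 : Polynomial ℂ) = 0 := by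
  show derivative (1 : Polynomial ℂ) = 0
  simp

lemma fieldQ (A u n2 N1 N2 c : ℂ) (hA : A ≠ 0) (hu : u ≠ 0) (hnum : N2 * n2 = c * N1) :
    (N2/(A*u)) * (n2 * u) = c * (N1/A) := by
  field_simp
  linear_combination hnum

lemma fieldP (A u v N M P a b c : ℂ) (hA : A ≠ 0) (hu : u ≠ 0) (hv : v ≠ 0)
    (hnum : N * a - b * M = c * P) :
    (N/(A*u)) * (a * u) - (b*v) * (M/(v*A)) = c * (P/A) := by
  field_simp
  linear_combination hnum

/-- The coefficient of the negative modes. -/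
def cf (h : ℝ) (k n : ℕ) : ℂ :=
  ((n : ℂ) + ((k : ℂ) + 1) * (h : ℂ)) / ∏ i ∈ Finset.range k, ((n : ℂ) + 2 * (h:ℂ) + (i : ℂ))

section scal
variable {h : ℝ} (hf : ∀ m : ℕ, ((m:ℂ) + 2*(h:ℂ)) ≠ 0)
include hf

lemma fact_ne (n i : ℕ) : ((n:ℂ) + 2*(h:ℂ) + (i:ℂ)) ≠ 0 := by
  have := hf (n + i)
  push_cast at this
  intro hc; apply this; linear_combination hc

lemma prod_ne (n k : ℕ) : (∏ i ∈ Finset.range k, ((n:ℂ) + 2*(h:ℂ) + (i:ℂ))) ≠ 0 :=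
  Finset.prod_ne_zero_iff.2 fun i _ => fact_ne hf n i

omit hf in
lemma prod_split (n k j : ℕ) :
    (∏ i ∈ Finset.range k, ((n:ℂ) + 2*(h:ℂ) + (i:ℂ)))
      * (∏ i ∈ Finset.range j, (((n+k:ℕ):ℂ) + 2*(h:ℂ) + (i:ℂ)))
    = ∏ i ∈ Finset.range (k+j), ((n:ℂ) + 2*(h:ℂ) + (i:ℂ)) := by
  rw [Finset.prod_range_add]
  congr 1
  apply Finset.prod_congr rfl
  intro i _
  push_cast
  ring

lemma scalRneg (j k n : ℕ) :
    cf h k n * cf h j (n+k) - cf h j n * cf h k (n+j)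
      = ((k:ℂ) - (j:ℂ)) * cf h (j+k) n := by
  unfold cf
  rw [div_mul_div_comm, div_mul_div_comm, prod_split n k j, prod_split n j k,
    Nat.add_comm k j, div_sub_div_same]
  rw [← mul_div_assoc]
  congr 1
  push_cast
  ring

lemma scalR1a (r t : ℕ) :
    cf h (r+2) (t+1) * ((((t+1)+(r+2):ℕ):ℂ) * ((((t+1)+(r+2):ℕ):ℂ) - 1 + 2*(h:ℂ)))
      - (((t:ℂ)+1) * ((t:ℂ) + 2*(h:ℂ))) * cf h (r+2) t
      = ((r:ℂ) + 3) * cf h (r+1) (t+1) := by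
  unfold cf
  have e1 : (∏ i ∈ Finset.range (r+2), (((t+1:ℕ):ℂ) + 2*(h:ℂ) + (i:ℂ)))
      = (∏ i ∈ Finset.range (r+1), (((t+1:ℕ):ℂ) + 2*(h:ℂ) + (i:ℂ)))
        * (((t+1:ℕ):ℂ) + 2*(h:ℂ) + ((r+1:ℕ):ℂ)) := by
    rw [Finset.prod_range_succ]
  have e2 : (∏ i ∈ Finset.range (r+2), ((t:ℂ) + 2*(h:ℂ) + (i:ℂ)))
      = ((t:ℂ) + 2*(h:ℂ)) * ∏ i ∈ Finset.range (r+1), (((t+1:ℕ):ℂ) + 2*(h:ℂ) + (i:ℂ)) := by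
    rw [Finset.prod_range_succ']
    rw [show (∏ i ∈ Finset.range (r+1), ((t:ℂ) + 2*(h:ℂ) + ((i+1:ℕ):ℂ)))
        = ∏ i ∈ Finset.range (r+1), (((t+1:ℕ):ℂ) + 2*(h:ℂ) + (i:ℂ)) from
      Finset.prod_congr rfl (by intro i _; push_cast; ring)]
    push_cast
    ring
  rw [e1, e2]
  have hQ := prod_ne hf (t+1) (r+1)
  have h1 : (((t+1:ℕ):ℂ) + 2*(h:ℂ) + ((r+1:ℕ):ℂ)) ≠ 0 := fact_ne hf (t+1) (r+1)
  have h2 : ((t:ℂ) + 2*(h:ℂ)) ≠ 0 := by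
    have := hf t; intro hc; apply this; linear_combination hc
  rw [show ((((t+1)+(r+2):ℕ):ℂ) - 1 + 2*(h:ℂ)) = (((t+1:ℕ):ℂ) + 2*(h:ℂ) + ((r+1:ℕ):ℂ)) from by
    push_cast; ring]
  exact fieldP _ _ _ _ _ _ _ _ _ hQ h1 h2 (by push_cast; ring)

lemma scalR1b (r : ℕ) :
    cf h (r+2) 0 * (((r+2:ℕ):ℂ) * (((r+2:ℕ):ℂ) - 1 + 2*(h:ℂ)))
      = ((r:ℂ) + 3) * cf h (r+1) 0 := by
  unfold cf
  have e1 : (∏ i ∈ Finset.range (r+2), (((0:ℕ):ℂ) + 2*(h:ℂ) + (i:ℂ)))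
      = (∏ i ∈ Finset.range (r+1), (((0:ℕ):ℂ) + 2*(h:ℂ) + (i:ℂ)))
        * (((0:ℕ):ℂ) + 2*(h:ℂ) + ((r+1:ℕ):ℂ)) := by
    rw [Finset.prod_range_succ]
  rw [e1]
  have hQ := prod_ne hf 0 (r+1)
  have h1 : (((0:ℕ):ℂ) + 2*(h:ℂ) + ((r+1:ℕ):ℂ)) ≠ 0 := fact_ne hf 0 (r+1)
  rw [show (((r+2:ℕ):ℂ) - 1 + 2*(h:ℂ)) = (((0:ℕ):ℂ) + 2*(h:ℂ) + ((r+1:ℕ):ℂ)) from by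
    push_cast; ring]
  exact fieldQ _ _ _ _ _ _ hQ h1 (by push_cast; ring)

end scal

/-- For nondegenerate extremal weight `h`, the q_R-conformal symmetries satisfy
the Witt relations on each half: `[Lₙ, Lₘ] = (n − m)·L_{n+m}` whenever `n, m ≥ −1`, and also
whenever `n, m ≤ 1`. -/
theorem stmt_7 (h : ℝ) (hh : ∀ k : ℕ, h ≠ -(k : ℝ) / 2)
    (L : ℤ → E)
    (hLpos : ∀ k : ℕ, L (k : ℤ) = Mz * Dop ^ (k + 1) + (((k : ℂ) + 1) * (h : ℂ)) • Dop ^ k)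
    (hLneg : ∀ k : ℕ, 1 ≤ k → ∀ n : ℕ,
      L (-(k : ℤ)) (X ^ n) =
        (((n : ℂ) + ((k : ℂ) + 1) * (h : ℂ)) /
            ∏ i ∈ Finset.range k, ((n : ℂ) + 2 * h + (i : ℂ))) • X ^ (n + k))
    :
    ∀ n m : ℤ, ((-1 ≤ n ∧ -1 ≤ m) ∨ (n ≤ 1 ∧ m ≤ 1)) →
      opComm (L n) (L m) = ((n - m : ℤ) : ℂ) • L (n + m) := by
  -- nonvanishing
  have hf : ∀ m : ℕ, ((m:ℂ) + 2*(h:ℂ)) ≠ 0 := by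
    intro m hc
    have h0 : (m:ℝ) + 2*h ≠ 0 := by
      have := hh m; intro hc2; apply this; linarith
    apply h0
    have hc3 : (((m:ℝ) + 2*h : ℝ) : ℂ) = 0 := by push_cast; linear_combination hc
    exact_mod_cast hc3
  have hL' : ∀ k : ℕ, L (k:ℤ) = Aop h k := fun k => hLpos k
  have hneg : ∀ k : ℕ, 1 ≤ k → ∀ n : ℕ, L (-(k:ℤ)) (X^n) = cf h k n • X^(n+k) :=
    fun k hk n => hLneg k hk n
  have hL0 : L 0 = Aop h 0 := by simpa using hL' 0
  have hL1 : L 1 = Aop h 1 := by simpa using hL' 1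
  have Lm1 : L (-1 : ℤ) = Mz := by
    apply ext_basis
    intro n
    have h1 := hneg 1 le_rfl n
    rw [show (-((1:ℕ):ℤ)) = (-1:ℤ) by norm_num] at h1
    rw [h1, MzX, cf, Finset.prod_range_one]
    rw [show ((n:ℂ) + (((1:ℕ):ℂ) + 1) * (h:ℂ)) = ((n:ℂ) + 2*(h:ℂ) + ((0:ℕ):ℂ)) from by
      push_cast; ring]
    rw [div_self (fact_ne hf n 0), one_smul]
  have L0X : ∀ n : ℕ, L 0 (X^n) = ((n:ℂ) + (h:ℂ)) • X^n := by
    intro n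
    rw [hL0, Aop]
    simp only [Nat.cast_zero, zero_add, pow_one, pow_zero, LinearMap.add_apply,
      LinearMap.smul_apply, Module.End.mul_apply, Module.End.one_apply]
    cases n with
    | zero =>
        rw [pow_zero, Done, map_zero]
        match_scalars <;> push_cast <;> ring
    | succ t =>
        rw [DX t, map_smul, MzX]
        match_scalars <;> push_cast <;> ring
  have L1X0 : L 1 (X^(0:ℕ)) = 0 := by
    rw [hL1, Aop, pow_zero]
    simp only [LinearMap.add_apply, LinearMap.smul_apply, Module.End.mul_apply]
    rw [show (Dop^(1+1) : E) = Dop * Dop from by rw [pow_succ, pow_one],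
      Module.End.mul_apply, Done, map_zero, map_zero, pow_one, Done]
    simp
  have L1Xs : ∀ t : ℕ, L 1 (X^(t+1)) = (((t:ℂ)+1) * ((t:ℂ) + 2*(h:ℂ))) • X^t := by
    intro t
    rw [hL1, Aop]
    simp only [LinearMap.add_apply, LinearMap.smul_apply, Module.End.mul_apply]
    rw [show (Dop^(1+1) : E) = Dop * Dop from by rw [pow_succ, pow_one],
      Module.End.mul_apply, pow_one, DX t, map_smul, map_smul]
    cases t with
    | zero =>
        rw [pow_zero, Done, map_zero, smul_zero]
        match_scalars <;> push_cast <;> ring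
    | succ s =>
        rw [DX s, smul_smul, map_smul, MzX]
        match_scalars <;> push_cast <;> ring
  -- reduce to the case m ≤ n
  suffices H : ∀ n m : ℤ, ((-1 ≤ n ∧ -1 ≤ m) ∨ (n ≤ 1 ∧ m ≤ 1)) → m ≤ n →
      opComm (L n) (L m) = ((n - m : ℤ) : ℂ) • L (n + m) by
    intro n m hcond
    rcases le_total m n with hle | hle
    · exact H n m hcond hle
    · have hmn := H m n (by tauto) hle
      rw [show opComm (L n) (L m) = -(opComm (L m) (L n)) from by rw [opComm, opComm, neg_sub],
        hmn, add_comm m n,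
        show ((n - m : ℤ) : ℂ) = -(((m - n : ℤ)) : ℂ) from by push_cast; ring]
      exact (neg_smul (((m - n : ℤ)) : ℂ) (L (n + m))).symm
  intro n m hcond hmn
  rcases le_or_gt 0 m with hm0 | hm0
  · -- both nonnegative
    obtain ⟨b, rfl⟩ := Int.eq_ofNat_of_zero_le hm0
    obtain ⟨a, rfl⟩ := Int.eq_ofNat_of_zero_le (le_trans hm0 hmn)
    rw [hL' a, hL' b, show ((a:ℤ) + (b:ℤ)) = ((a+b:ℕ):ℤ) from by push_cast; ring,
      hL' (a+b), commA h a b]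
    congr 1
    push_cast
    ring
  · -- m = -k with k ≥ 1
    obtain ⟨k, hk⟩ := Int.eq_ofNat_of_zero_le (by omega : (0:ℤ) ≤ -m)
    have hmk : m = -(k:ℤ) := by omega
    have hk1 : 1 ≤ k := by omega
    subst hmk
    rcases le_or_gt 0 n with hn0 | hn0
    · -- n = a ≥ 0
      obtain ⟨a, rfl⟩ := Int.eq_ofNat_of_zero_le hn0
      rcases eq_or_lt_of_le hk1 with hk1' | hk2
      · -- k = 1 : commutator with L₋₁ = Mz
        subst hk1'
        rw [show (-((1:ℕ):ℤ)) = (-1:ℤ) from by norm_num, Lm1]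
        cases a with
        | zero =>
            rw [show ((0:ℕ):ℤ) = (0:ℤ) from by norm_num, hL0, commQ h 0]
            rw [show ((0:ℤ) + -1) = (-1:ℤ) from by norm_num, Lm1]
            simp only [Nat.cast_zero, zero_add, mul_zero, zero_smul, add_zero, pow_zero,
              mul_one, one_smul]
            norm_num
        | succ s =>
            rw [hL' (s+1), commQ h (s+1),
              show (((s+1:ℕ):ℤ) + -1) = ((s:ℕ):ℤ) from by push_cast; ring, hL' s, Aop]
            simp only [Nat.add_sub_cancel]
            match_scalars <;> push_cast <;> ring
      · -- k ≥ 2, so a ≤ 1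
        have ha1 : a ≤ 1 := by
          rcases hcond with ⟨h1, h2⟩ | ⟨h1, h2⟩ <;> omega
        interval_cases a
        · -- a = 0 : [L₀, L₋ₖ] = k L₋ₖ
          rw [show ((0:ℕ):ℤ) = (0:ℤ) from by norm_num]
          rw [show ((0:ℤ) + -((k:ℕ):ℤ)) = -((k:ℕ):ℤ) from by ring]
          apply ext_basis
          intro n
          rw [opComm, LinearMap.sub_apply, Module.End.mul_apply, Module.End.mul_apply,
            LinearMap.smul_apply, hneg k hk1 n, map_smul, L0X (n+k), L0X n, map_smul,
            hneg k hk1 n, smul_smul, smul_smul, smul_smul, ← sub_smul]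
          congr 1
          push_cast
          ring
        · -- a = 1 : [L₁, L₋ₖ] = (k+1) L₋₍ₖ₋₁₎
          obtain ⟨r, rfl⟩ : ∃ r, k = r + 2 := ⟨k - 2, by omega⟩
          rw [show ((1:ℕ):ℤ) = (1:ℤ) from by norm_num]
          rw [show ((1:ℤ) + -(((r+2:ℕ)):ℤ)) = -(((r+1:ℕ)):ℤ) from by push_cast; ring]
          apply ext_basis
          intro n
          rw [opComm, LinearMap.sub_apply, Module.End.mul_apply, Module.End.mul_apply,
            LinearMap.smul_apply, hneg (r+2) (by omega) n, map_smul,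
            show n + (r+2) = (n+r+1)+1 from by omega, L1Xs (n+r+1),
            hneg (r+1) (by omega) n]
          cases n with
          | zero =>
              rw [L1X0, map_zero, sub_zero, smul_smul, smul_smul]
              rw [show (0:ℕ)+r+1 = 0+(r+1) from by omega]
              congr 1
              have hs := scalR1b hf r
              push_cast at hs ⊢
              linear_combination hs
          | succ t =>
              rw [L1Xs t, map_smul, hneg (r+2) (by omega) t,
                smul_smul, smul_smul, smul_smul,
                show t+(r+2) = (t+1)+r+1 from by omega,
                show (t+1)+(r+1) = (t+1)+r+1 from by omega, ← sub_smul]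
              congr 1
              have hs := scalR1a hf r t
              push_cast at hs ⊢
              linear_combination hs
    · -- n = -j with 1 ≤ j
      obtain ⟨j, hj⟩ := Int.eq_ofNat_of_zero_le (by omega : (0:ℤ) ≤ -n)
      have hnj : n = -(j:ℤ) := by omega
      have hj1 : 1 ≤ j := by omega
      subst hnj
      rw [show (-((j:ℕ):ℤ) + -((k:ℕ):ℤ)) = -(((j+k:ℕ)):ℤ) from by push_cast; ring]
      apply ext_basis
      intro n
      rw [opComm, LinearMap.sub_apply, Module.End.mul_apply, Module.End.mul_apply,
        LinearMap.smul_apply, hneg k hk1 n, map_smul, hneg j hj1 (n+k),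
        hneg j hj1 n, map_smul, hneg k hk1 (n+j), hneg (j+k) (by omega) n,
        smul_smul, smul_smul, smul_smul,
        show (n+k)+j = n+(j+k) from by omega,
        show (n+j)+k = n+(j+k) from by omega, ← sub_smul]
      congr 1
      have hs := scalRneg hf j k n
      push_cast at hs ⊢
      linear_combination hs

end
end

section
/- Let h > 0. Then on the unitarizable Verma module the q_R-conformal symmetries satisfy the adjointness relation L_n* = L₋ₙ: for every n ∈ ℤ and all p, q ∈ ℂ[z], ⟨L_n p, q⟩ = ⟨p, L₋ₙ q⟩. -/
open Polynomial

noncomputable section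

lemma Dop_pow_X (k m : ℕ) :
    (Dop ^ k) ((X : Polynomial ℂ) ^ m) = (∏ i ∈ Finset.range k, ((m:ℂ) - i)) • X ^ (m - k) := by
  induction k with
  | zero => simp
  | succ k ih =>
    rw [pow_succ', Module.End.mul_apply, ih, map_smul]
    have hD : Dop ((X : Polynomial ℂ) ^ (m - k)) = (((m - k : ℕ) : ℂ)) • X ^ (m - k - 1) := by
      show Polynomial.derivative _ = _
      rw [Polynomial.derivative_X_pow, Polynomial.smul_eq_C_mul]
    rw [hD, smul_smul, Finset.prod_range_succ, Nat.sub_sub]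
    rcases le_or_gt k m with hkm | hkm
    · rw [Nat.cast_sub hkm]
    · have hz : ∏ i ∈ Finset.range k, ((m:ℂ) - i) = 0 :=
        Finset.prod_eq_zero (Finset.mem_range.mpr hkm) (by simp)
      simp [hz]

lemma Lpos_X (h : ℝ) (k m : ℕ) :
    ((Mz * Dop ^ (k + 1) + (((k : ℂ) + 1) * (h : ℂ)) • Dop ^ k : E)) ((X:Polynomial ℂ) ^ m)
      = ((∏ i ∈ Finset.range k, ((m:ℂ) - i)) * (((m:ℂ) - k) + ((k:ℂ)+1)*(h:ℂ))) • X ^ (m - k) := by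
  rw [LinearMap.add_apply, Module.End.mul_apply, LinearMap.smul_apply, Dop_pow_X, Dop_pow_X,
    map_smul]
  have hMz : Mz ((X:Polynomial ℂ) ^ (m - (k+1))) = X ^ (m - (k+1) + 1) := by
    show (X : Polynomial ℂ) * _ = _
    rw [← pow_succ']
  rw [hMz, Finset.prod_range_succ, smul_smul]
  rcases le_or_gt (k+1) m with hkm | hkm
  · have he : m - (k+1) + 1 = m - k := by omega
    rw [he, ← add_smul]
    congr 1
    ring
  · have hz : (∏ i ∈ Finset.range k, ((m:ℂ) - i)) * ((m:ℂ) - k) = 0 := by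
      rcases eq_or_lt_of_le (Nat.lt_succ_iff.mp hkm) with he | hlt
      · simp [he]
      · exact mul_eq_zero.mpr (Or.inl (Finset.prod_eq_zero (Finset.mem_range.mpr hlt) (by simp)))
    rw [hz, zero_smul, zero_add, mul_add, hz, zero_add]
    congr 1
    ring

lemma prod_desc (n k : ℕ) :
    ∏ i ∈ Finset.range k, ((n:ℂ) + k - i) = ∏ i ∈ Finset.range k, ((n:ℂ) + 1 + i) := by
  rw [← Finset.prod_range_reflect (fun i => (n:ℂ) + 1 + i) k]
  apply Finset.prod_congr rfl
  intro j hj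
  rw [Finset.mem_range] at hj
  have h1 : (↑(k - 1 - j) : ℂ) = (k:ℂ) - 1 - j := by
    have h2 : k - 1 - j = k - (1 + j) := by omega
    rw [h2, Nat.cast_sub (by omega)]
    push_cast; ring
  simp only [h1]
  ring

lemma fact_cast (n k : ℕ) :
    (((n+k).factorial : ℕ) : ℂ) = (n.factorial : ℂ) * ∏ i ∈ Finset.range k, ((n:ℂ) + 1 + i) := by
  induction k with
  | zero => simp
  | succ k ih =>
    have h2 : n + (k+1) = (n+k) + 1 := by omega
    rw [Finset.prod_range_succ, ← mul_assoc, ← ih, h2, Nat.factorial_succ]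
    push_cast; ring

lemma w_cast (h : ℝ) (n : ℕ) :
    ((w h n : ℝ) : ℂ) = (n.factorial : ℂ) * ∏ i ∈ Finset.range n, (2*(h:ℂ) + i) := by
  unfold w
  push_cast
  ring

lemma den_ne (h : ℝ) (hpos : 0 < h) (n k : ℕ) :
    ∏ i ∈ Finset.range k, ((n:ℂ) + 2*(h:ℂ) + (i:ℂ)) ≠ 0 := by
  rw [Finset.prod_ne_zero_iff]
  intro i _
  have h2 : ((n:ℂ) + 2*h + i) = (((n + 2*h + i : ℝ)):ℂ) := by push_cast; ring
  rw [h2, Ne, Complex.ofReal_eq_zero]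
  positivity

lemma core (h : ℝ) (hpos : 0 < h) (j k : ℕ) :
    ((∏ i ∈ Finset.range k, ((((j+k : ℕ)) : ℂ) - (i:ℂ))) *
        ((((j+k:ℕ)):ℂ) - (k:ℂ) + ((k:ℂ)+1)*(h:ℂ))) * ((w h j : ℝ) : ℂ)
      = (((j:ℂ) + ((k:ℂ)+1)*(h:ℂ)) / ∏ i ∈ Finset.range k, ((j:ℂ) + 2*(h:ℂ) + (i:ℂ))) *
        ((w h (j+k) : ℝ) : ℂ) := by
  rw [div_mul_eq_mul_div, eq_div_iff (den_ne h hpos j k)]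
  have hc : ((j+k:ℕ):ℂ) = (j:ℂ) + (k:ℂ) := by push_cast; ring
  rw [hc, prod_desc, w_cast, w_cast, fact_cast, Finset.prod_range_add]
  rw [Finset.prod_congr rfl
    (fun i (_ : i ∈ Finset.range k) =>
      show 2*(h:ℂ) + ((j + i : ℕ):ℂ) = (j:ℂ) + 2*h + i by push_cast; ring)]
  ring

/-- For `h > 0`, on the unitarizable Verma module the q_R-conformal symmetries
satisfy `Lₙ* = L₋ₙ`: `⟨Lₙ p, q⟩ = ⟨p, L₋ₙ q⟩` for all `n ∈ ℤ` and all `p, q ∈ ℂ[z]`. -/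
theorem stmt_8 (h : ℝ) (hpos : 0 < h)
    (L : ℤ → E)
    (hLpos : ∀ k : ℕ, L (k : ℤ) = Mz * Dop ^ (k + 1) + (((k : ℂ) + 1) * (h : ℂ)) • Dop ^ k)
    (hLneg : ∀ k : ℕ, 1 ≤ k → ∀ n : ℕ,
      L (-(k : ℤ)) (X ^ n) =
        (((n : ℂ) + ((k : ℂ) + 1) * (h : ℂ)) /
            ∏ i ∈ Finset.range k, ((n : ℂ) + 2 * h + (i : ℂ))) • X ^ (n + k))
    (B : Polynomial ℂ → Polynomial ℂ → ℂ)
    (hB_addl : ∀ p q r : Polynomial ℂ, B (p + q) r = B p r + B q r)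
    (hB_smull : ∀ (a : ℂ) (p q : Polynomial ℂ), B (a • p) q = a * B p q)
    (hB_addr : ∀ p q r : Polynomial ℂ, B p (q + r) = B p q + B p r)
    (hB_smulr : ∀ (a : ℂ) (p q : Polynomial ℂ), B p (a • q) = (starRingEnd ℂ) a * B p q)
    (hB_orth : ∀ m n : ℕ, m ≠ n → B (X ^ m) (X ^ n) = 0)
    (hB_diag : ∀ n : ℕ, B (X ^ n) (X ^ n) = ((w h n : ℝ) : ℂ))
    :
    ∀ n : ℤ, ∀ p q : Polynomial ℂ, B (L n p) q = B p (L (-n) q) := by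
  have ext1 : ∀ (T S : E), (∀ m j : ℕ, B (T (X^m)) (X^j) = B (X^m) (S (X^j))) →
      ∀ (m : ℕ) (q : Polynomial ℂ), B (T (X^m)) q = B (X^m) (S q) := by
    intro T S hTS m q
    induction q using Polynomial.induction_on' with
    | add q1 q2 ih1 ih2 => rw [map_add, hB_addr, hB_addr, ih1, ih2]
    | monomial j b =>
      rw [← Polynomial.smul_X_eq_monomial, map_smul, hB_smulr, hB_smulr, hTS]
  have ext : ∀ (T S : E), (∀ m j : ℕ, B (T (X^m)) (X^j) = B (X^m) (S (X^j))) →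
      ∀ p q : Polynomial ℂ, B (T p) q = B p (S q) := by
    intro T S hTS p q
    induction p using Polynomial.induction_on' with
    | add p1 p2 ih1 ih2 => rw [map_add, hB_addl, hB_addl, ih1, ih2]
    | monomial m a =>
      rw [← Polynomial.smul_X_eq_monomial, map_smul, hB_smull, hB_smull, ext1 T S hTS]
  have keypos : ∀ k : ℕ, 1 ≤ k → ∀ m j : ℕ,
      B ((L (k:ℤ)) (X^m)) (X^j) = B (X^m) ((L (-(k:ℤ))) (X^j)) := by
    intro k hk m j
    rw [hLpos k, hLneg k hk j, Lpos_X, hB_smull, hB_smulr]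
    by_cases hm : m = j + k
    · subst hm
      have hsub : j + k - k = j := by omega
      rw [hsub, hB_diag, hB_diag]
      have hconj : (starRingEnd ℂ) (((j:ℂ) + ((k:ℂ)+1)*(h:ℂ)) /
          ∏ i ∈ Finset.range k, ((j:ℂ) + 2*h + i))
          = (((j:ℂ) + ((k:ℂ)+1)*(h:ℂ)) / ∏ i ∈ Finset.range k, ((j:ℂ) + 2*h + i)) := by
        simp [map_div₀, map_prod, Complex.conj_ofReal, map_ofNat]
      rw [hconj]
      exact core h hpos j k
    · rw [hB_orth m (j+k) hm, mul_zero]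
      by_cases hk2 : k ≤ m
      · rw [hB_orth (m-k) j (by omega), mul_zero]
      · have hz : (∏ i ∈ Finset.range k, ((m:ℂ) - i)) = 0 :=
          Finset.prod_eq_zero (i := m) (Finset.mem_range.mpr (by omega)) (by simp)
        rw [hz, zero_mul, zero_mul]
  have keyzero : ∀ m j : ℕ, B ((L ((0:ℕ):ℤ)) (X^m)) (X^j) = B (X^m) ((L ((0:ℕ):ℤ)) (X^j)) := by
    intro m j
    rw [hLpos 0, Lpos_X, Lpos_X, hB_smull, hB_smulr]
    simp only [Nat.sub_zero]
    by_cases hmj : m = j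
    · subst hmj
      have hconj : (starRingEnd ℂ) ((∏ i ∈ Finset.range 0, ((m:ℂ) - i)) *
          (((m:ℂ) - (0:ℕ)) + (((0:ℕ):ℂ)+1)*(h:ℂ)))
          = ((∏ i ∈ Finset.range 0, ((m:ℂ) - i)) *
          (((m:ℂ) - (0:ℕ)) + (((0:ℕ):ℂ)+1)*(h:ℂ))) := by
        simp [Complex.conj_ofReal]
      rw [hconj]
    · rw [hB_orth m j hmj, mul_zero, mul_zero]
  have keyneg : ∀ k : ℕ, 1 ≤ k → ∀ m j : ℕ,
      B ((L (-(k:ℤ))) (X^m)) (X^j) = B (X^m) ((L (k:ℤ)) (X^j)) := by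
    intro k hk m j
    rw [hLneg k hk m, hLpos k, Lpos_X, hB_smull, hB_smulr]
    by_cases hj : j = m + k
    · subst hj
      have hsub : m + k - k = m := by omega
      rw [hsub, hB_diag, hB_diag]
      have hconj : (starRingEnd ℂ) ((∏ i ∈ Finset.range k, (((m+k:ℕ):ℂ) - i)) *
          ((((m+k:ℕ):ℂ) - (k:ℕ)) + ((k:ℂ)+1)*(h:ℂ)))
          = ((∏ i ∈ Finset.range k, (((m+k:ℕ):ℂ) - i)) *
          ((((m+k:ℕ):ℂ) - (k:ℕ)) + ((k:ℂ)+1)*(h:ℂ))) := by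
        simp [map_prod, Complex.conj_ofReal]
      rw [hconj]
      exact (core h hpos m k).symm
    · rw [hB_orth (m+k) j (fun hc => hj hc.symm), mul_zero]
      by_cases hk2 : k ≤ j
      · rw [hB_orth m (j-k) (by omega), mul_zero]
      · have hz : (∏ i ∈ Finset.range k, ((j:ℂ) - i)) = 0 :=
          Finset.prod_eq_zero (i := j) (Finset.mem_range.mpr (by omega)) (by simp)
        rw [hz, zero_mul, map_zero, zero_mul]
  intro n p q
  obtain ⟨k, rfl | rfl⟩ := Int.eq_nat_or_neg n
  · rcases Nat.eq_zero_or_pos k with rfl | hk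
    · have h0 : -((0:ℕ):ℤ) = ((0:ℕ):ℤ) := by simp
      rw [h0]
      exact ext _ _ keyzero p q
    · exact ext _ _ (keypos k hk) p q
  · rcases Nat.eq_zero_or_pos k with rfl | hk
    · have h0 : -((0:ℕ):ℤ) = ((0:ℕ):ℤ) := by simp
      rw [h0, h0]
      exact ext _ _ keyzero p q
    · rw [neg_neg]
      exact ext _ _ (keyneg k hk) p q


end
end
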